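/- Let A and B be integers with 1 ≤ B < A, and let P be the generating function of the set of Dyck paths none of whose down-run lengths lies in the arithmetic progression {A·r + B : r ≥ 0}. Then, as formal power series, P = Σ_{0 ≤ k < A, k ≠ B} z^k·P^k + z^A·P^{A+1}. -/

import Mathlib

def heightAt (p : List Bool) (k : ℕ) : ℤ :=
  ((p.take k).count true : ℤ) - ((p.take k).count false : ℤ)

def IsDyck (p : List Bool) : Prop :=
  (∀ k, 0 ≤ heightAt p k) ∧ heightAt p p.length = 0

def HasPeakAt (p : List Bool) (h : ℤ) : Prop :=
  ∃ i, p[i]? = some true ∧ p[i+1]? = some false ∧ heightAt p (i+1) = h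

def HasValleyAt (p : List Bool) (h : ℤ) : Prop :=
  ∃ i, p[i]? = some false ∧ p[i+1]? = some true ∧ heightAt p (i+1) = h

def HasUpRun (p : List Bool) (m : ℕ) : Prop :=
  ∃ i, (∀ j, j < m → p[i+j]? = some true) ∧
    (i = 0 ∨ p[i-1]? = some false) ∧
    (p[i+m]? = some false ∨ i + m = p.length)

def HasDownRun (p : List Bool) (m : ℕ) : Prop :=
  ∃ i, (∀ j, j < m → p[i+j]? = some false) ∧
    (i = 0 ∨ p[i-1]? = some true) ∧
    (p[i+m]? = some true ∨ i + m = p.length)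

noncomputable def genFun (Q : List Bool → Prop) : PowerSeries ℕ :=
  PowerSeries.mk fun n => Set.ncard {p : List Bool | p.length = 2 * n ∧ IsDyck p ∧ Q p}

namespace Stmt11

open List

/-! ### heights -/

def ht (p : List Bool) : ℤ := ((p.count true : ℤ)) - ((p.count false : ℤ))

lemma heightAt_eq (p : List Bool) (k : ℕ) : heightAt p k = ht (p.take k) := rfl

lemma ht_append (u v : List Bool) : ht (u ++ v) = ht u + ht v := by
  simp [ht, List.count_append]; ring

lemma heightAt_length (p : List Bool) : heightAt p p.length = ht p := by
  rw [heightAt_eq, List.take_length]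

lemma heightAt_of_le (p : List Bool) {k : ℕ} (h : p.length ≤ k) :
    heightAt p k = ht p := by
  rw [heightAt_eq, List.take_of_length_le h]

lemma heightAt_append_left (u v : List Bool) {k : ℕ} (h : k ≤ u.length) :
    heightAt (u ++ v) k = heightAt u k := by
  rw [heightAt_eq, heightAt_eq, List.take_append_of_le_length h]

lemma heightAt_append_right (u v : List Bool) (j : ℕ) :
    heightAt (u ++ v) (u.length + j) = ht u + heightAt v j := by
  rw [heightAt_eq, heightAt_eq, List.take_append, ht_append, List.take_of_length_le (Nat.le_add_right _ _), Nat.add_sub_cancel_left]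

lemma count_add_count (p : List Bool) :
    p.count true + p.count false = p.length := by
  induction p with
  | nil => simp
  | cons b t ih => cases b <;> simp [List.count_cons] <;> omega

lemma ht_nil : ht ([] : List Bool) = 0 := rfl

lemma ht_cons (b : Bool) (p : List Bool) :
    ht (b :: p) = (if b then 1 else -1) + ht p := by
  cases b <;> simp [ht, List.count_cons] <;> ring

lemma ht_singleton (b : Bool) : ht [b] = (if b then 1 else -1) := by
  cases b <;> simp [ht]

lemma length_eq_two_mul (p : List Bool) (h : IsDyck p) :
    p.length = 2 * p.count true := by
  have h2 := h.2
  rw [heightAt_length] at h2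
  have : (p.count true : ℤ) = p.count false := by
    unfold ht at h2; omega
  have hc : p.count true = p.count false := by exact_mod_cast this
  have := count_add_count p
  omega

lemma heightAt_succ (p : List Bool) (k : ℕ) (b : Bool) (hb : p[k]? = some b) :
    heightAt p (k+1) = heightAt p k + (if b then 1 else -1) := by
  rw [heightAt_eq, heightAt_eq, List.take_succ, hb]
  show ht (p.take k ++ [b]) = _
  rw [ht_append, ht_singleton]

/-! ### glue -/

def glue : List (List Bool) → List Bool
  | [] => []
  | a :: l => a ++ (true :: (glue l ++ [false]))

lemma glue_length (l : List (List Bool)) :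
    (glue l).length = (l.map List.length).sum + 2 * l.length := by
  induction l with
  | nil => simp [glue]
  | cons a l ih => simp [glue, ih]; ring

lemma ht_glue (l : List (List Bool)) (h : ∀ a ∈ l, IsDyck a) : ht (glue l) = 0 := by
  induction l with
  | nil => rfl
  | cons a l ih =>
    have ha : ht a = 0 := by
      have := (h a (by simp)).2; rwa [heightAt_length] at this
    have ihl : ht (glue l) = 0 := ih (fun b hb => h b (by simp [hb]))
    show ht (a ++ (true :: (glue l ++ [false]))) = 0
    rw [ht_append, ht_cons, ht_append, ha, ihl, ht_singleton]
    simp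

/-- generic height computation inside a decomposition -/
lemma heightAt_mid (a w : List Bool) (ha : ht a = 0) (j : ℕ) :
    heightAt (a ++ (true :: (w ++ [false]))) (a.length + (1 + j))
      = 1 + heightAt (w ++ [false]) j := by
  have h1 : a ++ (true :: (w ++ [false])) = (a ++ [true]) ++ (w ++ [false]) := by simp
  have h2 : a.length + (1 + j) = (a ++ [true]).length + j := by simp; omega
  rw [h1, h2, heightAt_append_right, ht_append, ha, ht_singleton]
  simp

lemma heightAt_mid_ge (a w : List Bool) (ha : ht a = 0) (hw : IsDyck w) (j : ℕ)
    (hj : j ≤ w.length) :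
    1 ≤ heightAt (a ++ (true :: (w ++ [false]))) (a.length + (1 + j)) := by
  rw [heightAt_mid a w ha j, heightAt_append_left w [false] hj]
  have := hw.1 j
  omega

lemma isDyck_glue (l : List (List Bool)) (h : ∀ a ∈ l, IsDyck a) : IsDyck (glue l) := by
  induction l with
  | nil =>
    constructor
    · intro k; rw [heightAt_eq]; simp [glue, ht_nil]
    · rfl
  | cons a l ih =>
    have ha := h a (by simp)
    have ha0 : ht a = 0 := by have := ha.2; rwa [heightAt_length] at this
    have ihl : IsDyck (glue l) := ih (fun b hb => h b (by simp [hb]))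
    have hg0 : ht (glue l) = 0 := by have := ihl.2; rwa [heightAt_length] at this
    have htot : ht (glue (a :: l)) = 0 := ht_glue _ h
    constructor
    · intro k
      show 0 ≤ heightAt (a ++ (true :: (glue l ++ [false]))) k
      rcases le_or_gt k a.length with hk | hk
      · rw [heightAt_append_left _ _ hk]; exact ha.1 k
      · rcases le_or_gt k (a.length + (1 + (glue l).length)) with hk2 | hk2
        · obtain ⟨j, rfl⟩ : ∃ j, k = a.length + (1 + j) := ⟨k - a.length - 1, by omega⟩
          have hj : j ≤ (glue l).length := by omega
          have := heightAt_mid_ge a (glue l) ha0 ihl j hj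
          omega
        · have hlen : (a ++ (true :: (glue l ++ [false]))).length ≤ k := by
            simp; omega
          rw [heightAt_of_le _ hlen]
          show 0 ≤ ht (glue (a :: l))
          omega
    · rw [heightAt_length]; exact htot

/-- heights strictly inside the `true :: (w ++ [false])` part are ≥ 1 -/
lemma mid_pos (a w : List Bool) (ha : IsDyck a) (hw : IsDyck w)
    {k : ℕ} (h1 : a.length < k) (h2 : k < a.length + w.length + 2) :
    1 ≤ heightAt (a ++ (true :: (w ++ [false]))) k := by
  have ha0 : ht a = 0 := by have := ha.2; rwa [heightAt_length] at this
  obtain ⟨j, rfl⟩ : ∃ j, k = a.length + (1 + j) := ⟨k - a.length - 1, by omega⟩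
  exact heightAt_mid_ge a w ha0 hw j (by omega)

/-- uniqueness of the decomposition -/
lemma decomp_unique (a w a' w' : List Bool) (ha : IsDyck a) (hw : IsDyck w)
    (ha' : IsDyck a') (hw' : IsDyck w')
    (h : a ++ (true :: (w ++ [false])) = a' ++ (true :: (w' ++ [false]))) :
    a = a' ∧ w = w' := by
  have key : ∀ (x y x' y' : List Bool), IsDyck x → IsDyck y → IsDyck x' → IsDyck y' →
      x ++ (true :: (y ++ [false])) = x' ++ (true :: (y' ++ [false])) →
      ¬ (x.length < x'.length) := by
    intro x y x' y' hx hy hx' hy' heq hlt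
    have hxlen : x'.length < x.length + y.length + 2 := by
      have := congrArg List.length heq
      simp only [List.length_append, List.length_cons] at this
      omega
    have h1 : 1 ≤ heightAt (x ++ (true :: (y ++ [false]))) x'.length :=
      mid_pos x y hx hy hlt hxlen
    rw [heq, heightAt_append_left _ _ le_rfl, heightAt_length] at h1
    have := hx'.2; rw [heightAt_length] at this
    omega
  have hlen' : a.length = a'.length := by
    rcases lt_trichotomy a.length a'.length with hlt | heq | hgt
    · exact absurd hlt (key a w a' w' ha hw ha' hw' h)
    · exact heq
    · exact absurd hgt (key a' w' a w ha' hw' ha hw h.symm)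
  have haa : a = a' := by
    have h1 : (a ++ (true :: (w ++ [false]))).take a.length = a := by
      simp [List.take_left]
    have h2 : (a' ++ (true :: (w' ++ [false]))).take a'.length = a' := by
      simp [List.take_left]
    rw [← h1, ← h2, h, hlen']
  subst haa
  have h3 : true :: (w ++ [false]) = true :: (w' ++ [false]) :=
    (List.append_cancel_left h)
  have h4 : w ++ [false] = w' ++ [false] := by injection h3
  exact ⟨rfl, List.append_cancel_right h4⟩

/-- existence of the decomposition -/
lemma decomp_exists (p : List Bool) (hp : IsDyck p) (hne : p ≠ []) :
    ∃ a w, IsDyck a ∧ IsDyck w ∧ p = a ++ (true :: (w ++ [false])) := by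
  classical
  set n := p.length with hn
  have hn1 : 1 ≤ n := by
    rcases p with _ | _ <;> simp_all
  set i := Nat.findGreatest (fun k => heightAt p k = 0) (n - 1) with hi
  have h0 : heightAt p 0 = 0 := by simp [heightAt]
  have hspec : heightAt p i = 0 := by
    rw [hi]
    exact Nat.findGreatest_spec (P := fun k => heightAt p k = 0) (Nat.zero_le _) h0
  have hile : i ≤ n - 1 := by
    rw [hi]; exact Nat.findGreatest_le (P := fun k => heightAt p k = 0) _
  have hpos : ∀ k, i < k → k < n → 1 ≤ heightAt p k := by
    intro k h1 h2
    rw [hi] at h1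
    have hne : ¬ heightAt p k = 0 := Nat.findGreatest_is_greatest h1 (by omega)
    have := hp.1 k
    omega
  have hfin : heightAt p n = 0 := by
    rw [hn, heightAt_length]
    have := hp.2; rwa [heightAt_length] at this
  -- first step after i is an up step
  have hi1n : i + 1 < n := by
    by_contra hcon
    have hieq : i + 1 = n := by omega
    obtain ⟨b, hb⟩ : ∃ b, p[i]? = some b := by
      have : i < p.length := by omega
      exact ⟨p[i], List.getElem?_eq_getElem this⟩
    have := heightAt_succ p i b hb
    rw [hieq, hfin] at this
    cases b <;> simp at this <;> omega
  have hup : p[i]? = some true := by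
    obtain ⟨b, hb⟩ : ∃ b, p[i]? = some b := by
      have : i < p.length := by omega
      exact ⟨p[i], List.getElem?_eq_getElem this⟩
    cases b
    · exfalso
      have := heightAt_succ p i false hb
      have h2 := hpos (i+1) (by omega) (by omega)
      simp at this; omega
    · exact hb
  have hlast : p[n-1]? = some false ∧ heightAt p (n-1) = 1 := by
    obtain ⟨b, hb⟩ : ∃ b, p[n-1]? = some b := by
      have : n - 1 < p.length := by omega
      exact ⟨p[n-1], List.getElem?_eq_getElem this⟩
    have hstep := heightAt_succ p (n-1) b hb
    have heq : n - 1 + 1 = n := by omega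
    rw [heq, hfin] at hstep
    have hge : 1 ≤ heightAt p (n-1) := hpos (n-1) (by omega) (by omega)
    cases b
    · simp at hstep
      exact ⟨hb, by omega⟩
    · exfalso; simp at hstep; omega
  set a := p.take i with hadef
  set w := (p.drop (i+1)).dropLast with hwdef
  have hdne : p.drop (i+1) ≠ [] := by
    intro hcon
    have := congrArg List.length hcon
    simp at this; omega
  have hglast : (p.drop (i+1)).getLast hdne = false := by
    have h1 : (p.drop (i+1)).getLast? = some false := by
      rw [List.getLast?_eq_getElem?, List.getElem?_drop]
      have heq : i + 1 + ((p.drop (i+1)).length - 1) = n - 1 := by simp; omega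
      rw [heq]; exact hlast.1
    have h2 := List.getLast?_eq_getLast hdne
    rw [h1] at h2
    injection h2 with h3
    exact h3.symm
  have hsplit : p = a ++ (true :: (w ++ [false])) := by
    have e1 : p = p.take i ++ p.drop i := (List.take_append_drop i p).symm
    have e2 : p.drop i = p[i] :: p.drop (i+1) := List.drop_eq_getElem_cons (by omega)
    have e3 : p[i] = true := by
      have : i < p.length := by omega
      have h2 := List.getElem?_eq_getElem this
      rw [hup] at h2; injection h2 with h3; exact h3.symm
    have e4 : p.drop (i+1) = w ++ [false] := by
      rw [hwdef, ← hglast]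
      exact (List.dropLast_append_getLast hdne).symm
    rw [e1, e2, e3, e4]
  have hadyck : IsDyck a := by
    have hlena : a.length = i := by simp [hadef]; omega
    constructor
    · intro k
      rcases le_or_gt k i with hk | hk
      · have : heightAt a k = heightAt p k := by
          rw [heightAt_eq, heightAt_eq, hadef, List.take_take, min_eq_left hk]
        rw [this]; exact hp.1 k
      · rw [heightAt_of_le a (by omega), ← heightAt_length, hlena]
        have : heightAt a i = heightAt p i := by
          rw [heightAt_eq, heightAt_eq, hadef, List.take_take, min_self]
        rw [this, hspec]
    · rw [hlena]
      have : heightAt a i = heightAt p i := by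
        rw [heightAt_eq, heightAt_eq, hadef, List.take_take, min_self]
      rw [this, hspec]
  have hwlen : w.length = n - i - 2 := by
    simp [hwdef]; omega
  have hkey : ∀ j, j ≤ w.length → heightAt w j = heightAt p (i + 1 + j) - 1 := by
    intro j hj
    have e5 : p = (a ++ [true]) ++ (w ++ [false]) := by
      rw [hsplit]; simp
    have hlen5 : (a ++ [true]).length = i + 1 := by
      simp [hadef]; omega
    have := heightAt_append_right (a ++ [true]) (w ++ [false]) j
    rw [hlen5] at this
    have hta : ht (a ++ [true]) = 1 := by
      rw [ht_append, ht_singleton]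
      have := hadyck.2; rw [heightAt_length] at this
      simp; omega
    rw [hta] at this
    rw [heightAt_append_left w [false] hj] at this
    rw [← e5] at this
    omega
  have hwdyck : IsDyck w := by
    constructor
    · intro j
      rcases le_or_gt j w.length with hj | hj
      · rw [hkey j hj]
        have := hpos (i + 1 + j) (by omega) (by omega)
        -- i+1+j < n needs j < n - i - 1; j ≤ w.length = n-i-2 so ok
        omega
      · rw [heightAt_of_le w (by omega), ← heightAt_length]
        rw [hkey w.length le_rfl]
        have heq : i + 1 + w.length = n - 1 := by omega
        rw [heq, hlast.2]
        norm_num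
    · rw [hkey w.length le_rfl]
      have heq : i + 1 + w.length = n - 1 := by omega
      rw [heq, hlast.2]
      norm_num
  exact ⟨a, w, hadyck, hwdyck, hsplit⟩

lemma glue_injOn : ∀ l₁ l₂ : List (List Bool), (∀ a ∈ l₁, IsDyck a) →
    (∀ a ∈ l₂, IsDyck a) → glue l₁ = glue l₂ → l₁ = l₂ := by
  intro l₁
  induction l₁ with
  | nil =>
    intro l₂ _ _ h
    rcases l₂ with _ | ⟨a, l⟩
    · rfl
    · exfalso
      have := congrArg List.length h
      simp [glue] at this
  | cons a l ih =>
    intro l₂ h1 h2 h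
    rcases l₂ with _ | ⟨a', l'⟩
    · exfalso
      have := congrArg List.length h
      simp [glue] at this
    · have ha : IsDyck a := h1 a (by simp)
      have ha' : IsDyck a' := h2 a' (by simp)
      have hgl : IsDyck (glue l) := isDyck_glue l (fun b hb => h1 b (by simp [hb]))
      have hgl' : IsDyck (glue l') := isDyck_glue l' (fun b hb => h2 b (by simp [hb]))
      have h' : a ++ (true :: (glue l ++ [false])) = a' ++ (true :: (glue l' ++ [false])) := h
      obtain ⟨e1, e2⟩ := decomp_unique a (glue l) a' (glue l') ha hgl ha' hgl' h'
      have := ih l' (fun b hb => h1 b (by simp [hb])) (fun b hb => h2 b (by simp [hb])) e2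
      rw [e1, this]

lemma glue_surj (p : List Bool) (hp : IsDyck p) :
    ∃ l, (∀ a ∈ l, IsDyck a) ∧ glue l = p := by
  suffices H : ∀ n p, p.length = n → IsDyck p → ∃ l, (∀ a ∈ l, IsDyck a) ∧ glue l = p by
    exact H p.length p rfl hp
  intro n
  induction n using Nat.strong_induction_on with
  | _ n ih =>
    intro p hlen hp
    by_cases hne : p = []
    · exact ⟨[], by simp, by simp [glue, hne]⟩
    · obtain ⟨a, w, ha, hw, hsplit⟩ := decomp_exists p hp hne
      have hwlen : w.length < n := by
        have := congrArg List.length hsplit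
        simp at this; omega
      obtain ⟨l, hl1, hl2⟩ := ih w.length hwlen w rfl hw
      refine ⟨a :: l, ?_, ?_⟩
      · intro b hb
        rcases List.mem_cons.mp hb with h | h
        · rw [h]; exact ha
        · exact hl1 b h
      · show a ++ (true :: (glue l ++ [false])) = p
        rw [hl2, ← hsplit]

/-! ### down-runs -/

lemma lt_len {α : Type*} {l : List α} {k : ℕ} {b : α} (h : l[k]? = some b) :
    k < l.length := by
  by_contra hcon
  push_neg at hcon
  rw [List.getElem?_eq_none hcon] at h
  simp at h

lemma hdr_nil {m : ℕ} (hm : 1 ≤ m) : ¬ HasDownRun [] m := by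
  rintro ⟨i, hs, -, -⟩
  have := hs 0 (by omega)
  simp at this

lemma hdr_replicate (n : ℕ) {m : ℕ} (hm : 1 ≤ m) :
    HasDownRun (List.replicate n false) m ↔ m = n := by
  constructor
  · rintro ⟨i, hs, hst, he⟩
    have hi0 : i = 0 := by
      rcases hst with h | h
      · exact h
      · exfalso; rw [List.getElem?_replicate] at h
        split at h <;> simp_all
    subst hi0
    rcases he with h | h
    · exfalso; rw [List.getElem?_replicate] at h
      split at h <;> simp_all
    · simpa using h
  · rintro rfl
    refine ⟨0, ?_, Or.inl rfl, Or.inr (by simp)⟩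
    intro j hj
    rw [List.getElem?_replicate]
    simp [hj]

/-- master splitting lemma -/
lemma hdr_append (a w : List Bool) {m : ℕ} (hm : 1 ≤ m) :
    HasDownRun (a ++ (true :: w)) m ↔ HasDownRun a m ∨ HasDownRun w m := by
  set p := a ++ (true :: w) with hp
  have hplen : p.length = a.length + 1 + w.length := by
    rw [hp]; simp; omega
  have hleft : ∀ k, k < a.length → p[k]? = a[k]? := by
    intro k hk; rw [hp, List.getElem?_append, if_pos hk]
  have hmid : ∀ k, p[a.length + k]? = (true :: w)[k]? := by
    intro k; rw [hp, List.getElem?_append_right (by omega)]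
    congr 1; omega
  have hat : p[a.length]? = some true := by
    have := hmid 0; simpa using this
  have hright : ∀ k, p[a.length + 1 + k]? = w[k]? := by
    intro k
    have := hmid (k+1)
    rw [show a.length + (k+1) = a.length + 1 + k by omega] at this
    simpa using this
  constructor
  · rintro ⟨i, hs, hst, he⟩
    have hnotmid : ¬ (i ≤ a.length ∧ a.length < i + m) := by
      rintro ⟨h1, h2⟩
      have := hs (a.length - i) (by omega)
      rw [show i + (a.length - i) = a.length by omega, hat] at this
      simp at this
    by_cases hia : i + m ≤ a.length
    · left
      refine ⟨i, ?_, ?_, ?_⟩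
      · intro j hj
        have := hs j hj
        rwa [hleft (i+j) (by omega)] at this
      · rcases hst with h | h
        · exact Or.inl h
        · right; rwa [hleft (i-1) (by omega)] at h
      · rcases Nat.eq_or_lt_of_le hia with heq | hlt
        · exact Or.inr heq
        · rcases he with h | h
          · left; rwa [hleft (i+m) hlt] at h
          · exfalso; rw [hplen] at h; omega
    · right
      have hi : a.length < i := by
        by_cases hile : i ≤ a.length
        · exact absurd ⟨hile, by omega⟩ hnotmid
        · omega
      obtain ⟨i', rfl⟩ : ∃ i', i = a.length + 1 + i' := ⟨i - a.length - 1, by omega⟩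
      refine ⟨i', ?_, ?_, ?_⟩
      · intro j hj
        have := hs j hj
        rwa [show a.length + 1 + i' + j = a.length + 1 + (i' + j) by omega,
          hright (i'+j)] at this
      · rcases Nat.eq_zero_or_pos i' with h0 | h0
        · exact Or.inl h0
        · right
          rcases hst with h | h
          · omega
          · rwa [show a.length + 1 + i' - 1 = a.length + 1 + (i' - 1) by omega,
              hright (i'-1)] at h
      · rcases he with h | h
        · left
          rwa [show a.length + 1 + i' + m = a.length + 1 + (i' + m) by omega,
            hright (i'+m)] at h
        · right; rw [hplen] at h; omega
  · rintro (⟨i, hs, hst, he⟩ | ⟨i, hs, hst, he⟩)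
    · have him : i < a.length := lt_len (hs 0 (by omega))
      refine ⟨i, ?_, ?_, ?_⟩
      · intro j hj
        rw [hleft (i+j) (lt_len (hs j hj))]
        exact hs j hj
      · rcases hst with h | h
        · exact Or.inl h
        · right; rw [hleft (i-1) (by omega)]; exact h
      · rcases he with h | h
        · left; rw [hleft (i+m) (lt_len h)]; exact h
        · left; rw [h]; exact hat
    · have hi1 : i = 0 ∨ (1 ≤ i ∧ w[i-1]? = some true) := by
        rcases hst with h | h
        · exact Or.inl h
        · rcases Nat.eq_zero_or_pos i with h0 | h0
          · subst h0
            have := hs 0 (by omega)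
            simp at h this
            rw [h] at this
            simp at this
          · exact Or.inr ⟨h0, h⟩
      refine ⟨a.length + 1 + i, ?_, ?_, ?_⟩
      · intro j hj
        rw [show a.length + 1 + i + j = a.length + 1 + (i + j) by omega, hright]
        exact hs j hj
      · right
        rcases hi1 with h | ⟨h1, h2⟩
        · subst h
          rw [show a.length + 1 + 0 - 1 = a.length by omega]
          exact hat
        · rw [show a.length + 1 + i - 1 = a.length + 1 + (i - 1) by omega, hright]
          exact h2
      · rcases he with h | h
        · left
          rw [show a.length + 1 + i + m = a.length + 1 + (i + m) by omega, hright]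
          exact h
        · right; rw [hplen]; omega

def body : List (List Bool) → List Bool
  | [] => []
  | a :: l => a ++ (true :: body l)

lemma glue_eq_body (l : List (List Bool)) :
    glue l = body l ++ List.replicate l.length false := by
  induction l with
  | nil => rfl
  | cons a l ih =>
    show a ++ (true :: (glue l ++ [false])) = (a ++ (true :: body l)) ++ _
    rw [ih]
    simp [List.replicate_succ']

lemma hdr_body (l : List (List Bool)) {m : ℕ} (hm : 1 ≤ m) :
    HasDownRun (body l) m ↔ ∃ a ∈ l, HasDownRun a m := by
  induction l with
  | nil => simp [body, hdr_nil hm]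
  | cons a l ih =>
    show HasDownRun (a ++ (true :: body l)) m ↔ _
    rw [hdr_append a (body l) hm, ih]
    simp

lemma body_eq_concat (l : List (List Bool)) (h : l ≠ []) :
    ∃ u, body l = u ++ [true] := by
  induction l with
  | nil => simp at h
  | cons a l ih =>
    rcases l with _ | ⟨b, l'⟩
    · exact ⟨a, rfl⟩
    · obtain ⟨u, hu⟩ := ih (by simp)
      exact ⟨a ++ (true :: u), by show a ++ (true :: body (b :: l')) = _; rw [hu]; simp⟩

lemma hdr_glue (l : List (List Bool)) {m : ℕ} (hm : 1 ≤ m) :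
    HasDownRun (glue l) m ↔ (∃ a ∈ l, HasDownRun a m) ∨ (l ≠ [] ∧ m = l.length) := by
  rcases eq_or_ne l [] with rfl | hne
  · simp [glue, hdr_nil hm]
  · obtain ⟨u, hu⟩ := body_eq_concat l hne
    have h1 : glue l = u ++ (true :: List.replicate l.length false) := by
      rw [glue_eq_body, hu]; simp
    rw [h1, hdr_append u _ hm, hdr_replicate _ hm]
    have h2 : HasDownRun u m ↔ ∃ a ∈ l, HasDownRun a m := by
      rw [← hdr_body l hm, hu]
      have : u ++ [true] = u ++ (true :: ([] : List Bool)) := by simp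
      rw [this, hdr_append u [] hm]
      simp [hdr_nil hm]
    rw [h2]
    simp [hne]


/-! ### counting -/

variable (A B : ℕ)

def DSet (n : ℕ) : Set (List Bool) :=
  {p | p.length = 2 * n ∧ IsDyck p ∧ ∀ r : ℕ, ¬ HasDownRun p (A * r + B)}

def GLSet (m j : ℕ) : Set (List (List Bool)) :=
  {l | l.length = m ∧ (∀ a ∈ l, IsDyck a ∧ ∀ r : ℕ, ¬ HasDownRun a (A * r + B)) ∧
    (l.map List.length).sum = 2 * j}

lemma mem_DSet {n : ℕ} {p : List Bool} :
    p ∈ DSet A B n ↔ p.length = 2 * n ∧ IsDyck p ∧ ∀ r : ℕ, ¬ HasDownRun p (A * r + B) :=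
  Iff.rfl

lemma mem_GLSet {m j : ℕ} {l : List (List Bool)} :
    l ∈ GLSet A B m j ↔ l.length = m ∧
      (∀ a ∈ l, IsDyck a ∧ ∀ r : ℕ, ¬ HasDownRun a (A * r + B)) ∧
      (l.map List.length).sum = 2 * j :=
  Iff.rfl

variable {A B}

/-- characterization of goodness of a glued path -/
lemma good_glue (hB : 1 ≤ B) (l : List (List Bool)) (hl : ∀ a ∈ l, IsDyck a) :
    (∀ r : ℕ, ¬ HasDownRun (glue l) (A * r + B)) ↔
      ((∀ a ∈ l, ∀ r : ℕ, ¬ HasDownRun a (A * r + B)) ∧ ∀ r : ℕ, l.length ≠ A * r + B) := by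
  constructor
  · intro h
    constructor
    · intro a ha r hcon
      exact h r ((hdr_glue l (by omega)).mpr (Or.inl ⟨a, ha, hcon⟩))
    · intro r hcon
      have hne : l ≠ [] := by
        intro h0; rw [h0] at hcon; simp at hcon; omega
      exact h r ((hdr_glue l (by omega)).mpr (Or.inr ⟨hne, hcon.symm⟩))
  · rintro ⟨h1, h2⟩ r hcon
    rcases (hdr_glue l (by omega)).mp hcon with ⟨a, ha, hr⟩ | ⟨hne, heq⟩
    · exact h1 a ha r hr
    · exact h2 r heq.symm

lemma nat_le_sum {L : List ℕ} {x : ℕ} (h : x ∈ L) : x ≤ L.sum := by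
  induction L with
  | nil => simp at h
  | cons a t ih =>
    rcases List.mem_cons.mp h with rfl | h
    · simp
    · have := ih h; simp; omega

lemma finite_lists {α : Type*} {S : Set α} (hS : S.Finite) :
    ∀ m, {l : List α | l.length = m ∧ ∀ a ∈ l, a ∈ S}.Finite
  | 0 => by
    apply Set.Finite.subset (Set.finite_singleton ([] : List α))
    rintro l ⟨hl, -⟩
    simp [List.length_eq_zero_iff.mp hl]
  | (m+1) => by
    apply Set.Finite.subset ((hS.prod (finite_lists hS m)).image
      (fun x : α × List α => x.1 :: x.2))
    rintro l ⟨hl, hmem⟩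
    rcases l with _ | ⟨a, t⟩
    · simp at hl
    · exact ⟨(a, t), ⟨hmem a (by simp), by simp at hl; exact ⟨hl, fun b hb => hmem b (by simp [hb])⟩⟩, rfl⟩

lemma finite_DSet (n : ℕ) : (DSet A B n).Finite := by
  apply Set.Finite.subset (List.finite_length_eq Bool (2*n))
  rintro p ⟨hp, -⟩
  exact hp

lemma finite_GLSet (m j : ℕ) : (GLSet A B m j).Finite := by
  apply Set.Finite.subset (finite_lists (S := {q : List Bool | q.length ≤ 2*j})
    (List.finite_length_le Bool (2*j)) m)
  rintro l ⟨h1, h2, h3⟩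
  refine ⟨h1, fun a ha => ?_⟩
  have : a.length ∈ l.map List.length := List.mem_map_of_mem ha
  have := nat_le_sum this
  simp only [Set.mem_setOf_eq]
  omega

lemma ncard_prod {α β : Type*} (s : Set α) (t : Set β) :
    (s ×ˢ t).ncard = s.ncard * t.ncard := by
  rw [← Nat.card_coe_set_eq, ← Nat.card_coe_set_eq, ← Nat.card_coe_set_eq,
    ← Nat.card_prod]
  exact Nat.card_congr (Equiv.Set.prod s t)

lemma ncard_biUnion {ι α : Type*} [DecidableEq ι] (s : Finset ι) (f : ι → Set α)
    (hf : ∀ i ∈ s, (f i).Finite)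
    (hd : ∀ i ∈ s, ∀ j ∈ s, i ≠ j → Disjoint (f i) (f j)) :
    (⋃ i ∈ s, f i).ncard = ∑ i ∈ s, (f i).ncard := by
  induction s using Finset.induction_on with
  | empty => simp
  | @insert a s ha ih =>
    have hdisj : Disjoint (f a) (⋃ i ∈ s, f i) := by
      rw [Set.disjoint_iUnion_right]
      intro i
      rw [Set.disjoint_iUnion_right]
      intro hi
      exact hd a (Finset.mem_insert_self a s) i (Finset.mem_insert_of_mem hi)
        (fun h => ha (h ▸ hi))
    have hfin2 : (⋃ i ∈ s, f i).Finite := by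
      apply Set.Finite.biUnion (s.finite_toSet)
      intro i hi
      exact hf i (Finset.mem_insert_of_mem hi)
    rw [Finset.set_biUnion_insert, Set.ncard_union_eq hdisj
      (hf a (Finset.mem_insert_self a s)) hfin2, Finset.sum_insert ha,
      ih (fun i hi => hf i (Finset.mem_insert_of_mem hi))
        (fun i hi j hj hij => hd i (Finset.mem_insert_of_mem hi) j
          (Finset.mem_insert_of_mem hj) hij)]

lemma cons_injective : Function.Injective (fun x : List Bool × List (List Bool) => x.1 :: x.2) := by
  rintro ⟨a, t⟩ ⟨b, u⟩ h
  simp only at h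
  obtain ⟨h1, h2⟩ := List.cons.inj h
  simp [h1, h2]

/-- `GLSet (m+1)` decomposes as head-cons over the antidiagonal -/
lemma glset_succ (m j : ℕ) :
    GLSet A B (m+1) j =
      (fun x : List Bool × List (List Bool) => x.1 :: x.2) ''
        ⋃ x ∈ Finset.HasAntidiagonal.antidiagonal j, (DSet A B x.1) ×ˢ (GLSet A B m x.2) := by
  ext l
  constructor
  · rintro ⟨hlen, hgood, hsum⟩
    rcases l with _ | ⟨a, t⟩
    · simp at hlen
    · have ha := hgood a (by simp)
      have hu : a.length = 2 * a.count true := length_eq_two_mul a ha.1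
      have hsum' : a.length + (t.map List.length).sum = 2 * j := by
        simp at hsum; omega
      refine ⟨(a, t), ?_, rfl⟩
      rw [Set.mem_iUnion₂]
      refine ⟨(a.count true, j - a.count true), ?_, ?_, ?_⟩
      · rw [Finset.HasAntidiagonal.mem_antidiagonal]; omega
      · exact ⟨hu, ha.1, ha.2⟩
      · refine ⟨by simpa using hlen, fun b hb => hgood b (by simp [hb]), ?_⟩
        show (t.map List.length).sum = 2 * (j - a.count true)
        omega
  · rintro ⟨⟨a, t⟩, hmem, rfl⟩
    rw [Set.mem_iUnion₂] at hmem
    obtain ⟨⟨u, v⟩, huv, ⟨ha1, ha2, ha3⟩, ht1, ht2, ht3⟩ := hmem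
    rw [Finset.HasAntidiagonal.mem_antidiagonal] at huv
    dsimp only at huv ha1 ha2 ha3 ht1 ht2 ht3
    refine ⟨by simp [ht1], ?_, ?_⟩
    · intro b hb
      rcases List.mem_cons.mp hb with rfl | hb
      · exact ⟨ha2, ha3⟩
      · exact ht2 b hb
    · simp only [List.map_cons, List.sum_cons]
      omega

section GF

variable (hB : 1 ≤ B) (hBA : B < A)

noncomputable abbrev P' (A B : ℕ) : PowerSeries ℕ :=
  genFun (fun p => ∀ r : ℕ, ¬ HasDownRun p (A * r + B))

lemma coeff_P (n : ℕ) : (PowerSeries.coeff n) (P' A B) = (DSet A B n).ncard := by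
  rw [P', genFun, PowerSeries.coeff_mk]
  rfl

lemma coeff_pow : ∀ m j : ℕ, (PowerSeries.coeff j) ((P' A B) ^ m) = (GLSet A B m j).ncard := by
  intro m
  induction m with
  | zero =>
    intro j
    rw [pow_zero, PowerSeries.coeff_one]
    rcases eq_or_ne j 0 with rfl | hj
    · have : GLSet A B 0 0 = {[]} := by
        ext l
        constructor
        · rintro ⟨h1, -, -⟩; simp [List.length_eq_zero_iff.mp h1]
        · rintro rfl; exact ⟨rfl, by simp, by simp⟩
      simp [this]
    · have : GLSet A B 0 j = ∅ := by
        ext l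
        simp only [Set.mem_empty_iff_false, iff_false]
        rintro ⟨h1, -, h3⟩
        rw [List.length_eq_zero_iff.mp h1] at h3
        simp at h3; omega
      simp [this, hj]
  | succ m ih =>
    intro j
    classical
    rw [pow_succ', PowerSeries.coeff_mul]
    have step1 : ∀ x ∈ Finset.HasAntidiagonal.antidiagonal j,
        (PowerSeries.coeff x.1) (P' A B) * (PowerSeries.coeff x.2) ((P' A B) ^ m)
          = ((DSet A B x.1) ×ˢ (GLSet A B m x.2)).ncard := by
      intro x hx
      rw [coeff_P, ih, ncard_prod]
    rw [Finset.sum_congr rfl step1]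
    rw [← ncard_biUnion (Finset.HasAntidiagonal.antidiagonal j)
      (fun x => (DSet A B x.1) ×ˢ (GLSet A B m x.2))
      (fun x hx => (finite_DSet x.1).prod (finite_GLSet m x.2))
      ?disj]
    case disj =>
      intro x hx y hy hxy
      rw [Set.disjoint_left]
      rintro ⟨a, t⟩ ⟨hax, -⟩ ⟨hay, -⟩
      apply hxy
      have h1 : a.length = 2 * x.1 := hax.1
      have h2 : a.length = 2 * y.1 := hay.1
      rw [Finset.HasAntidiagonal.mem_antidiagonal] at hx hy
      have : x.1 = y.1 := by omega
      have : x.2 = y.2 := by omega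
      exact Prod.ext ‹x.1 = y.1› ‹x.2 = y.2›
    rw [glset_succ, Set.ncard_image_of_injective _ cons_injective]

open Classical in
/-- the central counting identity -/
lemma main_count (hB : 1 ≤ B) (n : ℕ) :
    (DSet A B n).ncard = ∑ m ∈ Finset.range (n+1),
      (if (∀ r : ℕ, m ≠ A * r + B) then (GLSet A B m (n-m)).ncard else 0) := by
  classical
  set E : ℕ → Set (List (List Bool)) := fun m =>
    {l | (∀ r : ℕ, m ≠ A * r + B) ∧ l ∈ GLSet A B m (n-m)} with hE
  have himg : DSet A B n = glue '' (⋃ m ∈ Finset.range (n+1), E m) := by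
    ext p
    simp only [Set.mem_image, Set.mem_iUnion, exists_prop]
    constructor
    · rintro ⟨hlen, hdyck, hgood⟩
      obtain ⟨l, hl1, hl2⟩ := glue_surj p hdyck
      have hglen := glue_length l
      rw [hl2] at hglen
      have hml : l.length ≤ n := by omega
      obtain ⟨hgood', hallow⟩ := (good_glue hB l hl1).mp (by rw [hl2]; exact hgood)
      refine ⟨l, ⟨l.length, Finset.mem_range.mpr (by omega), hallow, rfl,
        fun a ha => ⟨hl1 a ha, hgood' a ha⟩, by omega⟩, hl2⟩
    · rintro ⟨l, ⟨m, hm, hallow, hlen, hgood, hsum⟩, rfl⟩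
      have hdl : ∀ a ∈ l, IsDyck a := fun a ha => (hgood a ha).1
      have hmr := Finset.mem_range.mp hm
      refine ⟨?_, isDyck_glue l hdl, ?_⟩
      · rw [glue_length, hsum, hlen]; omega
      · apply (good_glue hB l hdl).mpr
        refine ⟨fun a ha => (hgood a ha).2, ?_⟩
        rw [hlen]; exact hallow
  have hinj : Set.InjOn glue (⋃ m ∈ Finset.range (n+1), E m) := by
    intro l1 h1 l2 h2 heq
    simp only [Set.mem_iUnion, exists_prop] at h1 h2
    obtain ⟨m1, -, -, -, hg1, -⟩ := h1
    obtain ⟨m2, -, -, -, hg2, -⟩ := h2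
    exact glue_injOn l1 l2 (fun a ha => (hg1 a ha).1) (fun a ha => (hg2 a ha).1) heq
  have hfin : ∀ m ∈ Finset.range (n+1), (E m).Finite := by
    intro m _
    exact (finite_GLSet m (n-m)).subset (fun l hl => hl.2)
  have hdisj : ∀ i ∈ Finset.range (n+1), ∀ j ∈ Finset.range (n+1), i ≠ j →
      Disjoint (E i) (E j) := by
    intro i _ j _ hij
    rw [Set.disjoint_left]
    rintro l ⟨-, hli, -, -⟩ ⟨-, hlj, -, -⟩
    exact hij (hli ▸ hlj)
  rw [himg, Set.ncard_image_of_injOn hinj,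
    ncard_biUnion (Finset.range (n+1)) E hfin hdisj]
  apply Finset.sum_congr rfl
  intro m _
  by_cases hal : ∀ r : ℕ, m ≠ A * r + B
  · rw [if_pos hal]
    congr 1
    ext l
    simp only [hE, Set.mem_setOf_eq]
    exact ⟨fun h => h.2, fun h => ⟨hal, h⟩⟩
  · rw [if_neg hal]
    have : E m = ∅ := by
      ext l
      simp only [hE, Set.mem_setOf_eq, Set.mem_empty_iff_false, iff_false]
      rintro ⟨h1, -⟩
      exact hal h1
    rw [this]
    simp

/-! ### algebra -/

lemma coeff_X_pow_mul' (φ : PowerSeries ℕ) (k n : ℕ) :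
    (PowerSeries.coeff n) (PowerSeries.X ^ k * φ) =
      if k ≤ n then (PowerSeries.coeff (n-k)) φ else 0 := by
  split
  · next h =>
    have := PowerSeries.coeff_X_pow_mul φ k (n - k)
    rwa [show n - k + k = n by omega] at this
  · next h =>
    rw [PowerSeries.coeff_mul]
    apply Finset.sum_eq_zero
    intro x hx
    rw [Finset.HasAntidiagonal.mem_antidiagonal] at hx
    rw [PowerSeries.coeff_X_pow, if_neg (by omega)]
    simp

lemma allowed_lt (hBA : B < A) {m : ℕ} (hm : m < A) :
    (∀ r : ℕ, m ≠ A * r + B) ↔ m ≠ B := by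
  constructor
  · intro h; simpa using h 0
  · intro h r heq
    rcases Nat.eq_zero_or_pos r with rfl | hr
    · simp at heq; omega
    · have : A ≤ A * r := Nat.le_mul_of_pos_right A hr
      omega

lemma allowed_shift (hBA : B < A) (m' : ℕ) :
    (∀ r : ℕ, A + m' ≠ A * r + B) ↔ (∀ r : ℕ, m' ≠ A * r + B) := by
  constructor
  · intro h r heq
    apply h (r+1)
    rw [Nat.mul_succ]
    omega
  · intro h r heq
    rcases Nat.eq_zero_or_pos r with rfl | hr
    · simp at heq; omega
    · obtain ⟨r', rfl⟩ : ∃ r', r = r' + 1 := ⟨r - 1, by omega⟩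
      apply h r'
      rw [Nat.mul_succ] at heq
      omega

end GF


end Stmt11

theorem stmt11 (A B : ℕ) (hB : 1 ≤ B) (hBA : B < A) :
    let P := genFun (fun p => ∀ r : ℕ, ¬ HasDownRun p (A * r + B))
    P = (∑ k ∈ (Finset.range A).erase B, PowerSeries.X ^ k * P ^ k) +
      PowerSeries.X ^ A * P ^ (A + 1) := by
  classical
  intro P
  have hPP : P = Stmt11.P' A B := rfl
  apply PowerSeries.ext
  intro n
  rw [map_add, map_sum]
  have key : ∀ N : ℕ, (PowerSeries.coeff N) P = ∑ m ∈ Finset.range (N+1),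
      (if (∀ r : ℕ, m ≠ A * r + B)
        then (PowerSeries.coeff (N-m)) (P^m) else 0) := by
    intro N
    rw [hPP, Stmt11.coeff_P, Stmt11.main_count hB N]
    apply Finset.sum_congr rfl
    intro m _
    split
    · exact (Stmt11.coeff_pow m (N-m)).symm
    · rfl
  rw [key n,
    ← Finset.sum_filter_add_sum_filter_not (Finset.range (n+1)) (fun m => m < A)]
  have claim1 : ∑ m ∈ (Finset.range (n+1)).filter (fun m => m < A),
      (if (∀ r : ℕ, m ≠ A * r + B)
        then (PowerSeries.coeff (n-m)) (P^m) else 0)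
      = ∑ k ∈ (Finset.range A).erase B,
          (PowerSeries.coeff n) (PowerSeries.X ^ k * P ^ k) := by
    rw [Finset.sum_congr rfl
      (fun k _ => Stmt11.coeff_X_pow_mul' (P^k) k n),
      ← Finset.sum_filter, ← Finset.sum_filter]
    apply Finset.sum_congr _ (fun m _ => rfl)
    ext k
    simp only [Finset.mem_filter, Finset.mem_range, Finset.mem_erase]
    constructor
    · rintro ⟨⟨hk1, hk2⟩, hk3⟩
      exact ⟨⟨(Stmt11.allowed_lt hBA hk2).mp hk3, hk2⟩, by omega⟩
    · rintro ⟨⟨hk1, hk2⟩, hk3⟩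
      exact ⟨⟨by omega, hk2⟩, (Stmt11.allowed_lt hBA hk2).mpr hk1⟩
  have claim2 : ∑ m ∈ (Finset.range (n+1)).filter (fun m => ¬ m < A),
      (if (∀ r : ℕ, m ≠ A * r + B)
        then (PowerSeries.coeff (n-m)) (P^m) else 0)
      = (PowerSeries.coeff n) (PowerSeries.X ^ A * P ^ (A+1)) := by
    rw [Stmt11.coeff_X_pow_mul' (P^(A+1)) A n]
    by_cases hAn : A ≤ n
    · rw [if_pos hAn]
      obtain ⟨N, rfl⟩ : ∃ N, n = A + N := ⟨n - A, by omega⟩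
      have hNN : A + N - A = N := by omega
      rw [hNN]
      -- reindex the left side
      have himg : (Finset.range (A + N + 1)).filter (fun m => ¬ m < A)
          = (Finset.range (N+1)).image (fun m' => A + m') := by
        ext m
        simp only [Finset.mem_filter, Finset.mem_range, Finset.mem_image]
        constructor
        · rintro ⟨h1, h2⟩
          exact ⟨m - A, by omega, by omega⟩
        · rintro ⟨m', hm', rfl⟩
          omega
      rw [himg, Finset.sum_image (by intro x _ y _ h; simp only at h; omega)]
      -- rewrite each summand
      have hsummand : ∀ m' ∈ Finset.range (N+1),
          (if (∀ r : ℕ, A + m' ≠ A * r + B)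
            then (PowerSeries.coeff (A + N - (A+m'))) (P^(A+m')) else 0)
          = ∑ y ∈ Finset.HasAntidiagonal.antidiagonal (N - m'),
              (if (∀ r : ℕ, m' ≠ A * r + B)
                then (PowerSeries.coeff y.1) (P^A) *
                  (PowerSeries.coeff y.2) (P^m') else 0) := by
        intro m' _
        have e1 : A + N - (A + m') = N - m' := by omega
        have e2 : P^(A+m') = P^A * P^(m') := pow_add P A m'
        rw [e1, e2, PowerSeries.coeff_mul]
        by_cases hal : ∀ r : ℕ, m' ≠ A * r + B
        · rw [if_pos ((Stmt11.allowed_shift hBA m').mpr hal)]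
          exact Finset.sum_congr rfl (fun y _ => by rw [if_pos hal])
        · rw [if_neg (fun h => hal ((Stmt11.allowed_shift hBA m').mp h))]
          rw [Finset.sum_congr rfl (fun y _ => by rw [if_neg hal] : ∀ y ∈ _, _ = (0:ℕ))]
          simp
      rw [Finset.sum_congr rfl hsummand]
      -- rewrite the right side
      rw [pow_succ, PowerSeries.coeff_mul]
      have hr : ∀ x ∈ Finset.HasAntidiagonal.antidiagonal N,
          (PowerSeries.coeff x.1) (P^A) * (PowerSeries.coeff x.2) P
          = ∑ m' ∈ Finset.range (x.2+1),
              (if (∀ r : ℕ, m' ≠ A * r + B)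
                then (PowerSeries.coeff x.1) (P^A) *
                  (PowerSeries.coeff (x.2-m')) (P^m') else 0) := by
        intro x _
        rw [key x.2, Finset.mul_sum]
        exact Finset.sum_congr rfl (fun m' _ => by
          split <;> simp)
      rw [Finset.sum_congr rfl hr]
      -- now exchange the sums via a bijection of sigma types
      rw [Finset.sum_sigma', Finset.sum_sigma']
      apply Finset.sum_nbij'
        (i := fun x : Σ _ : ℕ, ℕ × ℕ => (⟨(x.2.1, x.1 + x.2.2), x.1⟩ : Σ _ : ℕ × ℕ, ℕ))
        (j := fun y : Σ _ : ℕ × ℕ, ℕ => (⟨y.2, (y.1.1, y.1.2 - y.2)⟩ : Σ _ : ℕ, ℕ × ℕ))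
      · rintro ⟨m', u, w⟩ hx
        simp only [Finset.mem_sigma, Finset.mem_range, Finset.HasAntidiagonal.mem_antidiagonal] at hx ⊢
        omega
      · rintro ⟨⟨u, v⟩, m'⟩ hy
        simp only [Finset.mem_sigma, Finset.mem_range, Finset.HasAntidiagonal.mem_antidiagonal] at hy ⊢
        omega
      · rintro ⟨m', u, w⟩ hx
        show (⟨m', (u, m' + w - m')⟩ : Σ _ : ℕ, ℕ × ℕ) = ⟨m', (u, w)⟩
        rw [Nat.add_sub_cancel_left]
      · rintro ⟨⟨u, v⟩, m'⟩ hy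
        simp only [Finset.mem_sigma, Finset.mem_range, Finset.HasAntidiagonal.mem_antidiagonal] at hy
        show (⟨(u, m' + (v - m')), m'⟩ : Σ _ : ℕ × ℕ, ℕ) = ⟨(u, v), m'⟩
        have hv : m' + (v - m') = v := by omega
        rw [hv]
      · rintro ⟨m', u, w⟩ hx
        simp only [Finset.mem_sigma, Finset.mem_range, Finset.HasAntidiagonal.mem_antidiagonal] at hx
        simp only [Nat.add_sub_cancel_left]
    · rw [if_neg hAn]
      have : (Finset.range (n+1)).filter (fun m => ¬ m < A) = ∅ := by
        ext m
        simp only [Finset.mem_filter, Finset.mem_range, Finset.notMem_empty, iff_false]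
        rintro ⟨h1, h2⟩
        omega
      rw [this, Finset.sum_empty]
  rw [claim1, claim2]
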